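/- Let k ≥ 2 be an integer and c > 1 a non-integer, and suppose hypothesis (PSW) holds with constant 0 < P(c,k) ≤ 1/(ck). Let ω be a real number and C₀ ≥ 1. Then there is a constant C (depending on C₀) such that uniformly for α ∈ [0,1) and all x ≥ 2: | ∑_{x/C₀ ≤ n ≤ x} n^{ω−1/(ck)} 1_{N_(c)^k}(n) e(nα) − (1/c) ∑_{x/C₀ ≤ n ≤ x} n^{ω−1/k} 1_{N^k}(n) e(nα) | ≤ C·x^{ω − P(c,k)}. -/

import Mathlib

open MeasureTheory Filter Finset Set

noncomputable section

/-- `e(α) = exp(2πiα)`. -/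
def eR (α : ℝ) : ℂ := Complex.exp (2 * Real.pi * Complex.I * α)

/-- The Piatetski-Shapiro set `N_(c) = {⌊n^c⌋ : n ∈ ℕ, n ≥ 1}`. -/
def NPS (c : ℝ) : Set ℕ := {m | ∃ n : ℕ, 1 ≤ n ∧ m = ⌊(n : ℝ) ^ c⌋₊}

/-- `H₀(c)` for non-integral real `c > 1`. -/
def H0c (c : ℝ) : ℝ :=
  if c < 2 then 2 else ((⌊2 * c⌋ : ℝ) + 1) * ((⌊2 * c⌋ : ℝ) + 2) / 2

/-- `H₀(k)` for a positive integer `k`. -/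
def H0k (k : ℕ) : ℕ :=
  if k ≤ 4 then 2 ^ (k - 1) else k * (k - 1) / 2 + Nat.sqrt (2 * k + 2)

/-- `k`-th powers of positive integers. -/
def Npow (k : ℕ) : Set ℕ := {m | ∃ n : ℕ, 1 ≤ n ∧ m = n ^ k}

/-- `k`-th powers of Piatetski-Shapiro numbers. -/
def NPSpow (c : ℝ) (k : ℕ) : Set ℕ := {m | ∃ n ∈ NPS c, m = n ^ k}

/-- `k`-th powers of primes. -/
def Ppow (k : ℕ) : Set ℕ := {m | ∃ p : ℕ, p.Prime ∧ m = p ^ k}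

/-- `k`-th powers of Piatetski-Shapiro primes. -/
def PPSpow (c : ℝ) (k : ℕ) : Set ℕ := {m | ∃ p ∈ NPS c, p.Prime ∧ m = p ^ k}

/-- The representation function `r_{A,h}(n)`: the number of ordered `h`-tuples
from `A` summing to `n`. -/
def rep (A : Set ℕ) (h n : ℕ) : ℕ :=
  Nat.card {x : Fin h → ℕ // (∀ i, x i ∈ A) ∧ ∑ i, x i = n}

open scoped Classical in
/-- The finite set of ordered `h`-tuples of elements of `A` summing to `N`. -/
def tuples (A : Set ℕ) (h N : ℕ) : Finset (Fin h → ℕ) :=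
  (Fintype.piFinset fun _ : Fin h => Finset.range (N + 1)).filter
    (fun x => (∀ i, x i ∈ A) ∧ ∑ i, x i = N)

/-- Weighted exponential sum `∑_{1 ≤ n ≤ x, n ∈ A} w(n) e(nα)`. -/
def expSum (A : Set ℕ) (w : ℕ → ℝ) (α x : ℝ) : ℂ :=
  ∑ n ∈ Finset.Icc 1 ⌊x⌋₊, ((Set.indicator A w n : ℝ) : ℂ) * eR (n * α)

/-- Weighted exponential sum `∑_{y ≤ n ≤ x, n ∈ A} w(n) e(nα)`. -/
def expSumI (A : Set ℕ) (w : ℕ → ℝ) (α y x : ℝ) : ℂ :=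
  ∑ n ∈ Finset.Icc ⌈y⌉₊ ⌊x⌋₊, ((Set.indicator A w n : ℝ) : ℂ) * eR (n * α)

/-- Distance to the nearest integer. -/
def distInt (α : ℝ) : ℝ := |α - (round α : ℝ)|

/-- The major arc `𝔐 = {α ∈ [0,1] : ‖α‖ ≤ N^ν / N}`. -/
def MajorArc (ν : ℝ) (N : ℕ) : Set ℝ :=
  {α ∈ Set.Icc (0:ℝ) 1 | distInt α ≤ (N : ℝ) ^ ν / N}

/-- The minor arc `𝔪 = [0,1] ∖ 𝔐`. -/
def MinorArc (ν : ℝ) (N : ℕ) : Set ℝ := Set.Icc (0:ℝ) 1 \ MajorArc ν N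

/-- `T(α;x) = ∑_{n≤x} n^{ω-1/c} 1_{N_(c)}(n) e(nα)`. -/
def Tc (c ω : ℝ) (α x : ℝ) : ℂ := expSum (NPS c) (fun n => (n : ℝ) ^ (ω - 1 / c)) α x

/-- `T^♯(α;x) = ∑_{x/h≤n≤x} n^{ω-1/c} 1_{N_(c)}(n) e(nα)`. -/
def TcSharp (c ω : ℝ) (h : ℕ) (α x : ℝ) : ℂ :=
  expSumI (NPS c) (fun n => (n : ℝ) ^ (ω - 1 / c)) α (x / h) x

/-- `U(α;x) = ∑_{n≤x} n^{ω-1} e(nα)`. -/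
def Uc (ω : ℝ) (α x : ℝ) : ℂ :=
  ∑ n ∈ Finset.Icc 1 ⌊x⌋₊, (((n : ℝ) ^ (ω - 1) : ℝ) : ℂ) * eR (n * α)

/-- `U^♯(α;x) = ∑_{x/h≤n≤x} n^{ω-1} e(nα)`. -/
def UcSharp (ω : ℝ) (h : ℕ) (α x : ℝ) : ℂ :=
  ∑ n ∈ Finset.Icc ⌈x / h⌉₊ ⌊x⌋₊, (((n : ℝ) ^ (ω - 1) : ℝ) : ℂ) * eR (n * α)

/-- The complete Gauss-type sum `S(a,q) = ∑_{r=1}^q e(a r^k / q)`. -/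
def Swar (k a q : ℕ) : ℂ := ∑ r ∈ Finset.Icc 1 q, eR (((a * r ^ k : ℕ) : ℝ) / q)

/-- The singular series of Waring's problem. -/
def SingSer (k h n : ℕ) : ℝ :=
  (∑' q : ℕ, ∑ a ∈ (Finset.Icc 1 q).filter (fun a => Nat.gcd a q = 1),
      (Swar k a q / (q : ℂ)) ^ h * eR (-(((n * a : ℕ) : ℝ) / q))).re

/-- The restricted Gauss-type sum `S*(q,a) = ∑_{1≤r≤q, (r,q)=1} e(a r^k / q)`. -/
def SwarStar (k a q : ℕ) : ℂ :=
  ∑ r ∈ (Finset.Icc 1 q).filter (fun r => Nat.gcd r q = 1), eR (((a * r ^ k : ℕ) : ℝ) / q)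

/-- The singular series of the Waring–Goldbach problem. -/
def SingSerStar (k h n : ℕ) : ℝ :=
  (∑' q : ℕ, ∑ a ∈ (Finset.Icc 1 q).filter (fun a => Nat.gcd a q = 1),
      (SwarStar k a q / (Nat.totient q : ℂ)) ^ h * eR (-(((n * a : ℕ) : ℝ) / q))).re

/-- `K(k) = ∏_{(p-1) ∣ k} p^{ν(k,p)}`. -/
def Kk (k : ℕ) : ℕ :=
  ∏ p ∈ (Finset.range (k + 2)).filter (fun p => p.Prime ∧ (p - 1) ∣ k),
    p ^ (k.factorization p + if p = 2 ∧ 2 ∣ k then 2 else 1)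

/-- A measurable positive function is regularly varying if `F(λx)/F(x)` converges
to a positive limit for every `λ > 0`. -/
def RegularlyVarying (F : ℝ → ℝ) : Prop :=
  Measurable F ∧ ∀ l : ℝ, 0 < l → ∃ L : ℝ, 0 < L ∧
    Filter.Tendsto (fun x => F (l * x) / F x) Filter.atTop (nhds L)

/-- Hypothesis (PSW). -/
def PSW (c : ℝ) (k : ℕ) (P : ℝ) : Prop :=
  ∃ C : ℝ, ∀ α ∈ Set.Ico (0:ℝ) 1, ∀ x : ℝ, 2 ≤ x →
    ‖(expSum (NPSpow c k) (fun _ => 1) α x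
      - (1 / c) * expSum (Npow k) (fun n => (n : ℝ) ^ ((1 / c - 1) / k)) α x)‖
      ≤ C * x ^ (1 / (c * k) - P)

/-- Hypothesis (PSWG). -/
def PSWG (c : ℝ) (k : ℕ) (P : ℝ) : Prop :=
  ∃ C : ℝ, ∀ α ∈ Set.Ico (0:ℝ) 1, ∀ x : ℝ, 2 ≤ x →
    ‖(expSum (PPSpow c k) (fun n => Real.log n) α x
      - (1 / c) * expSum (Ppow k) (fun n => (n : ℝ) ^ ((1 / c - 1) / k) * Real.log n) α x)‖
      ≤ C * x ^ (1 / (c * k) - P)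

lemma abs_eR (t : ℝ) : ‖eR t‖ = 1 := by
  simp [eR, Complex.norm_exp]

lemma sum_Icc_one_step (b : ℕ → ℂ) {t : ℕ} (ht : 1 ≤ t) :
    ∑ n ∈ Finset.Icc 1 t, b n = ∑ n ∈ Finset.Icc 1 (t - 1), b n + b t := by
  obtain ⟨s, rfl⟩ : ∃ s, t = s + 1 := ⟨t - 1, by omega⟩
  simp [Finset.sum_Icc_succ_top (by omega : 1 ≤ s + 1)]

lemma abel_id (b : ℕ → ℂ) (g : ℕ → ℝ) (M : ℕ) (hM : 1 ≤ M) :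
    ∀ N, M ≤ N →
    ∑ n ∈ Finset.Icc M N, (g n : ℂ) * b n
      = (g N : ℂ) * (∑ n ∈ Finset.Icc 1 N, b n)
        - (g M : ℂ) * (∑ n ∈ Finset.Icc 1 (M - 1), b n)
        + ∑ n ∈ Finset.Ico M N, ((g n - g (n + 1) : ℝ) : ℂ) * (∑ m ∈ Finset.Icc 1 n, b m) := by
  refine Nat.le_induction ?_ ?_
  · rw [sum_Icc_one_step b hM]
    simp only [Finset.Icc_self, Finset.sum_singleton, Finset.Ico_self, Finset.sum_empty]
    ring
  · intro N hN ih
    have hA : ∑ n ∈ Finset.Icc 1 (N + 1), b n = ∑ n ∈ Finset.Icc 1 N, b n + b (N + 1) := by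
      have := sum_Icc_one_step b (t := N + 1) (by omega)
      simpa using this
    rw [Finset.sum_Icc_succ_top (a := M) (by omega : M ≤ N + 1),
        Finset.sum_Ico_succ_top hN, ih, hA]
    push_cast
    ring

lemma tel (f : ℕ → ℝ) (M : ℕ) : ∀ N, M ≤ N →
    ∑ n ∈ Finset.Ico M N, (f (n + 1) - f n) = f N - f M := by
  refine Nat.le_induction ?_ ?_
  · simp
  · intro N hN ih
    rw [Finset.sum_Ico_succ_top hN, ih]; ring

lemma abel_bound (b : ℕ → ℂ) (g : ℕ → ℝ) (M N : ℕ) (hM : 1 ≤ M) (hMN : M ≤ N) (B : ℝ)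
    (hA : ∀ t, t ≤ N → ‖∑ n ∈ Finset.Icc 1 t, b n‖ ≤ B)
    (hg : ∀ n, 0 ≤ g n)
    (hmono : (∀ m n, M ≤ m → m ≤ n → n ≤ N → g m ≤ g n)
      ∨ (∀ m n, M ≤ m → m ≤ n → n ≤ N → g n ≤ g m)) :
    ‖∑ n ∈ Finset.Icc M N, (g n : ℂ) * b n‖ ≤ 2 * B * (g M + g N) := by
  have hB : 0 ≤ B := le_trans (norm_nonneg _) (hA 0 (Nat.zero_le _))
  rw [abel_id b g M hM N hMN]
  have h1 : ‖(g N : ℂ) * (∑ n ∈ Finset.Icc 1 N, b n)‖ ≤ g N * B := by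
    rw [norm_mul, Complex.norm_real, Real.norm_eq_abs, abs_of_nonneg (hg N)]
    exact mul_le_mul_of_nonneg_left (hA N le_rfl) (hg N)
  have h2 : ‖(g M : ℂ) * (∑ n ∈ Finset.Icc 1 (M - 1), b n)‖ ≤ g M * B := by
    rw [norm_mul, Complex.norm_real, Real.norm_eq_abs, abs_of_nonneg (hg M)]
    exact mul_le_mul_of_nonneg_left (hA (M - 1) (by omega)) (hg M)
  have h3 : ‖∑ n ∈ Finset.Ico M N, ((g n - g (n + 1) : ℝ) : ℂ)
      * (∑ m ∈ Finset.Icc 1 n, b m)‖ ≤ (g M + g N) * B := by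
    calc ‖_‖ ≤ ∑ n ∈ Finset.Ico M N, |g n - g (n + 1)| * B := by
          refine le_trans (norm_sum_le _ _) (Finset.sum_le_sum fun n hn => ?_)
          rw [norm_mul, Complex.norm_real, Real.norm_eq_abs]
          exact mul_le_mul_of_nonneg_left (hA n (le_of_lt (Finset.mem_Ico.mp hn).2))
            (abs_nonneg _)
      _ = (∑ n ∈ Finset.Ico M N, |g (n + 1) - g n|) * B := by
          rw [← Finset.sum_mul]; congr 1; exact Finset.sum_congr rfl fun n _ => by
            rw [abs_sub_comm]
      _ ≤ (g M + g N) * B := by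
          refine mul_le_mul_of_nonneg_right ?_ hB
          rcases hmono with hmono | hmono
          · have : ∀ n ∈ Finset.Ico M N, |g (n + 1) - g n| = g (n + 1) - g n := fun n hn => by
              have h := Finset.mem_Ico.mp hn
              exact abs_of_nonneg (sub_nonneg.mpr (hmono n (n+1) h.1 (by omega) (by omega)))
            rw [Finset.sum_congr rfl this, tel g M N hMN]
            have := hg M; linarith
          · have : ∀ n ∈ Finset.Ico M N, |g (n + 1) - g n| = g n - g (n + 1) := fun n hn => by
              have h := Finset.mem_Ico.mp hn
              have hle := hmono n (n + 1) h.1 (by omega) (by omega)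
              rw [abs_sub_comm]
              exact abs_of_nonneg (by linarith)
            rw [Finset.sum_congr rfl this]
            have : ∑ n ∈ Finset.Ico M N, (g n - g (n + 1))
                = -∑ n ∈ Finset.Ico M N, (g (n + 1) - g n) := by
              rw [← Finset.sum_neg_distrib]; exact Finset.sum_congr rfl fun n _ => by ring
            rw [this, tel g M N hMN]
            have := hg N; linarith
  calc ‖_‖ ≤ (g N * B + g M * B) + (g M + g N) * B := by
        refine le_trans (norm_add_le _ _) (add_le_add ?_ h3)
        exact le_trans (norm_sub_le _ _) (add_le_add h1 h2)
      _ ≤ 2 * B * (g M + g N) := by nlinarith [hg M, hg N]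

/-- Dyadic weighted transfer estimate from `N_(c)^k` to `N^k`. -/
theorem stmt13 (k : ℕ) (hk : 2 ≤ k) (c : ℝ) (hc1 : 1 < c) (hcni : ∀ m : ℤ, c ≠ (m : ℝ))
    (P : ℝ) (hP0 : 0 < P) (hP1 : P ≤ 1 / (c * k)) (hPSW : PSW c k P)
    (ω : ℝ) (C₀ : ℝ) (hC₀ : 1 ≤ C₀) :
    ∃ C > (0:ℝ), ∀ α ∈ Set.Ico (0:ℝ) 1, ∀ x : ℝ, 2 ≤ x →
      ‖(expSumI (NPSpow c k) (fun n => (n : ℝ) ^ (ω - 1 / (c * k))) α (x / C₀) x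
          - (1 / c) * expSumI (Npow k) (fun n => (n : ℝ) ^ (ω - 1 / k)) α (x / C₀) x)‖
        ≤ C * x ^ (ω - P) := by
  obtain ⟨C₁, hC₁⟩ := hPSW
  have hc0 : (0:ℝ) < c := lt_trans one_pos hc1
  have hk0 : (0:ℝ) < (k:ℝ) := by positivity
  have hck : (0:ℝ) < c * k := by positivity
  have he : (0:ℝ) ≤ 1 / (c * k) - P := by
    have := hP1; linarith
  set θ := ω - 1 / (c * k) with hθdef
  set K := C₀ ^ |θ| with hKdef
  have hK1 : (1:ℝ) ≤ K := Real.one_le_rpow hC₀ (abs_nonneg _)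
  have hK0 : (0:ℝ) < K := lt_of_lt_of_le one_pos hK1
  set C' := max C₁ 0 + 2 with hC'def
  have hC'2 : (2:ℝ) ≤ C' := by
    have : (0:ℝ) ≤ max C₁ 0 := le_max_right _ _
    linarith
  have hC'0 : (0:ℝ) < C' := by linarith
  refine ⟨4 * K * C', by positivity, ?_⟩
  intro α hα x hx
  have hx0 : (0:ℝ) < x := by linarith
  have hx1 : (1:ℝ) ≤ x := by linarith
  have hC₀0 : (0:ℝ) < C₀ := by linarith
  set M := ⌈x / C₀⌉₊ with hMdef
  set N := ⌊x⌋₊ with hNdef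
  have hNx : (N : ℝ) ≤ x := Nat.floor_le hx0.le
  set e₀ := 1 / (c * k) - P with he₀def
  set B := C' * x ^ e₀ with hBdef
  have hxe1 : (1:ℝ) ≤ x ^ e₀ := Real.one_le_rpow hx1 he
  have hB0 : (0:ℝ) ≤ B := by positivity
  set b : ℕ → ℂ := fun n =>
    ((Set.indicator (NPSpow c k) (fun _ => (1:ℝ)) n : ℝ) : ℂ) * eR (n * α)
      - (1 / (c:ℂ)) * (((Set.indicator (Npow k)
          (fun n => (n : ℝ) ^ ((1 / c - 1) / (k:ℝ))) n : ℝ) : ℂ) * eR (n * α)) with hbdef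
  have hAbound : ∀ t, t ≤ N → ‖∑ n ∈ Finset.Icc 1 t, b n‖ ≤ B := by
    intro t ht
    have hid : ∑ n ∈ Finset.Icc 1 t, b n
        = expSum (NPSpow c k) (fun _ => 1) α t
          - (1 / c) * expSum (Npow k) (fun n => (n : ℝ) ^ ((1 / c - 1) / (k:ℝ))) α t := by
      simp only [expSum, Nat.floor_natCast, Finset.mul_sum, ← Finset.sum_sub_distrib, hbdef]
    by_cases ht2 : 2 ≤ t
    · have hbd := hC₁ α hα t (by exact_mod_cast ht2)
      rw [hid]
      refine le_trans hbd ?_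
      have htx : (t : ℝ) ≤ x := le_trans (by exact_mod_cast ht) hNx
      calc C₁ * (t:ℝ) ^ e₀ ≤ max C₁ 0 * (t:ℝ) ^ e₀ :=
            mul_le_mul_of_nonneg_right (le_max_left _ _) (Real.rpow_nonneg (Nat.cast_nonneg t) _)
        _ ≤ max C₁ 0 * x ^ e₀ :=
            mul_le_mul_of_nonneg_left (Real.rpow_le_rpow (Nat.cast_nonneg t) htx he)
              (le_max_right _ _)
        _ ≤ B := by
            rw [hBdef]
            refine mul_le_mul_of_nonneg_right (by rw [hC'def]; linarith)
              (Real.rpow_nonneg hx0.le _)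
    · interval_cases t
      · simp only [show Finset.Icc 1 0 = ∅ from rfl, Finset.sum_empty, norm_zero]
        positivity
      · rw [Finset.Icc_self, Finset.sum_singleton]
        have hi1 : |Set.indicator (NPSpow c k) (fun _ => (1:ℝ)) 1| ≤ 1 := by
          by_cases h : (1:ℕ) ∈ NPSpow c k <;> simp [h]
        have hi2 : |Set.indicator (Npow k) (fun n => (n : ℝ) ^ ((1 / c - 1) / (k:ℝ))) 1| ≤ 1 := by
          by_cases h : (1:ℕ) ∈ Npow k <;> simp [h]
        have hcinv : ‖1 / (c:ℂ)‖ ≤ 1 := by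
          rw [norm_div, norm_one, Complex.norm_real, Real.norm_eq_abs, abs_of_pos hc0]
          rw [div_le_one hc0]; linarith
        have h1 : ‖b 1‖ ≤ 2 := by
          rw [hbdef]
          refine le_trans (norm_sub_le _ _) ?_
          rw [norm_mul, norm_mul, norm_mul, abs_eR, Complex.norm_real, Complex.norm_real, Real.norm_eq_abs,
            Real.norm_eq_abs]
          push_cast
          nlinarith [norm_nonneg (1 / (c:ℂ)), abs_nonneg
            (Set.indicator (Npow k) (fun n => (n : ℝ) ^ ((1 / c - 1) / (k:ℝ))) 1)]
        refine le_trans h1 ?_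
        calc (2:ℝ) = 2 * 1 := by ring
          _ ≤ C' * x ^ e₀ := mul_le_mul hC'2 hxe1 one_pos.le hC'0.le
  by_cases hMN : M ≤ N
  · have hM1 : 1 ≤ M := Nat.ceil_pos.mpr (by positivity)
    have hMx : x / C₀ ≤ (M : ℝ) := Nat.le_ceil _
    have hkne : (k:ℝ) ≠ 0 := hk0.ne'
    have hcne : c ≠ 0 := hc0.ne'
    have hsum : expSumI (NPSpow c k) (fun n => (n : ℝ) ^ (ω - 1 / (c * k))) α (x / C₀) x
          - (1 / c) * expSumI (Npow k) (fun n => (n : ℝ) ^ (ω - 1 / k)) α (x / C₀) x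
        = ∑ n ∈ Finset.Icc M N, (((n : ℝ) ^ θ : ℝ) : ℂ) * b n := by
      simp only [expSumI, Finset.mul_sum, ← Finset.sum_sub_distrib, ← hMdef, ← hNdef]
      refine Finset.sum_congr rfl fun n hn => ?_
      have hn1 : 1 ≤ n := le_trans hM1 (Finset.mem_Icc.mp hn).1
      have hn0 : (0:ℝ) < (n:ℝ) := by exact_mod_cast hn1
      have key : (n : ℝ) ^ (ω - 1 / (k:ℝ)) = (n : ℝ) ^ θ * (n : ℝ) ^ ((1 / c - 1) / (k:ℝ)) := by
        rw [← Real.rpow_add hn0]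
        congr 1
        rw [hθdef]
        field_simp
        ring
      rw [hbdef]
      by_cases h1 : n ∈ NPSpow c k <;> by_cases h2 : n ∈ Npow k <;>
        simp only [Set.indicator_of_mem, Set.indicator_of_notMem, h1, h2, key,
          not_false_iff] <;>
        push_cast <;> ring
    rw [hsum]
    have hg : ∀ n : ℕ, 0 ≤ (n : ℝ) ^ θ := fun n => Real.rpow_nonneg (Nat.cast_nonneg n) _
    have hmono : (∀ m n, M ≤ m → m ≤ n → n ≤ N → (m:ℝ) ^ θ ≤ (n:ℝ) ^ θ)
        ∨ (∀ m n, M ≤ m → m ≤ n → n ≤ N → (n:ℝ) ^ θ ≤ (m:ℝ) ^ θ) := by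
      by_cases hθ : 0 ≤ θ
      · exact Or.inl fun m n _ hmn _ =>
          Real.rpow_le_rpow (Nat.cast_nonneg m) (by exact_mod_cast hmn) hθ
      · refine Or.inr fun m n hm hmn _ => ?_
        have hm0 : (0:ℝ) < (m:ℝ) := by exact_mod_cast lt_of_lt_of_le Nat.zero_lt_one (le_trans hM1 hm)
        exact Real.rpow_le_rpow_of_nonpos hm0 (by exact_mod_cast hmn) (le_of_not_ge hθ)
    have habel := abel_bound b (fun n => (n:ℝ) ^ θ) M N hM1 hMN B hAbound hg hmono
    refine le_trans habel ?_
    have hbnd : ∀ n : ℕ, M ≤ n → n ≤ N → (n:ℝ) ^ θ ≤ K * x ^ θ := by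
      intro n h1 h2
      by_cases hθ : 0 ≤ θ
      · have hnx : (n:ℝ) ≤ x := le_trans (by exact_mod_cast h2) hNx
        have h3 : (n:ℝ) ^ θ ≤ x ^ θ := Real.rpow_le_rpow (Nat.cast_nonneg n) hnx hθ
        nlinarith [Real.rpow_nonneg hx0.le θ]
      · have hθ' : θ < 0 := lt_of_not_ge hθ
        have hxC : x / C₀ ≤ (n:ℝ) := le_trans hMx (by exact_mod_cast h1)
        have h3 : (n:ℝ) ^ θ ≤ (x / C₀) ^ θ :=
          Real.rpow_le_rpow_of_nonpos (by positivity) hxC hθ'.le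
        have h4 : (x / C₀) ^ θ = K * x ^ θ := by
          rw [Real.div_rpow hx0.le hC₀0.le, div_eq_mul_inv, ← Real.rpow_neg hC₀0.le,
            hKdef, abs_of_neg hθ']
          ring
        rw [h4] at h3; exact h3
    have hM' := hbnd M le_rfl hMN
    have hN' := hbnd N hMN le_rfl
    have hxadd : x ^ e₀ * x ^ θ = x ^ (ω - P) := by
      rw [← Real.rpow_add hx0, he₀def, hθdef]
      congr 1; ring
    calc 2 * B * ((M:ℝ) ^ θ + (N:ℝ) ^ θ) ≤ 2 * B * (K * x ^ θ + K * x ^ θ) := by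
          refine mul_le_mul_of_nonneg_left (by linarith) (by linarith)
      _ = 4 * K * C' * (x ^ e₀ * x ^ θ) := by rw [hBdef]; ring
      _ = 4 * K * C' * x ^ (ω - P) := by rw [hxadd]
  · have hempty : Finset.Icc M N = ∅ := Finset.Icc_eq_empty hMN
    simp only [expSumI, ← hMdef, ← hNdef, hempty, Finset.sum_empty, mul_zero, sub_zero,
      norm_zero]
    positivity
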